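/- Let A ∈ ℝ^{n×n}, B ∈ ℝ^{n×p}, F ∈ ℝ^{r×n} with rank(F) = r, t₁ > 0, and let 𝒞 be the controllability matrix of (A, B). Then the following are equivalent: (i) for every z* ∈ ℝ^r there exists a continuous control u : [0, t₁] → ℝ^p such that F·∫₀^{t₁} exp(A(t₁−s))·B·u(s) ds = z* (i.e., every target state z* is reachable from x(0) = 0 in time t₁); (ii) rank(F·𝒞) = r. -/

import Mathlib

open Matrix intervalIntegral

/-- Controllability matrix of the pair `(A, B)`: the horizontal block concatenation of
`B, A*B, A²*B, …, A^(n-1)*B`, indexed so that entry `(i, (k, j))` is `(A^k * B) i j`. -/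
noncomputable def ctrbMat {n p : ℕ} (A : Matrix (Fin n) (Fin n) ℝ)
    (B : Matrix (Fin n) (Fin p) ℝ) : Matrix (Fin n) (Fin n × Fin p) ℝ :=
  fun i kj => (A ^ (kj.1 : ℕ) * B) i kj.2

/-- Controllability Gramian `W_c(t₁) = ∫₀^{t₁} exp(As) B Bᵀ exp(Aᵀs) ds` (entrywise integral). -/
noncomputable def ctrbGram {n p : ℕ} (A : Matrix (Fin n) (Fin n) ℝ)
    (B : Matrix (Fin n) (Fin p) ℝ) (t₁ : ℝ) : Matrix (Fin n) (Fin n) ℝ :=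
  fun i j => ∫ s in (0:ℝ)..t₁,
    (NormedSpace.exp (s • A) * B * Bᵀ * NormedSpace.exp (s • Aᵀ)) i j

namespace OutCtrbAux

open NormedSpace Set MeasureTheory

variable {n p : ℕ}

lemma pow_mem_span (A : Matrix (Fin n) (Fin n) ℝ) (m : ℕ) :
    A ^ m ∈ Submodule.span ℝ (Set.range fun k : Fin n => A ^ (k : ℕ)) := by
  rcases Nat.eq_zero_or_pos n with hn | hn
  · subst hn
    have : A ^ m = 0 := by ext i j; exact Fin.elim0 i
    rw [this]; exact zero_mem _
  · rw [Matrix.pow_eq_aeval_mod_charpoly]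
    set q := (Polynomial.X ^ m %ₘ A.charpoly) with hq
    rcases eq_or_ne q 0 with h0 | h0
    · rw [h0, map_zero]; exact zero_mem _
    have hdeg : q.natDegree < n := by
      have h1 : q.degree < A.charpoly.degree :=
        Polynomial.degree_modByMonic_lt _ A.charpoly_monic
      have h2 : A.charpoly.degree = (n : ℕ) := by
        rw [Matrix.charpoly_degree_eq_dim, Fintype.card_fin]
      rw [Polynomial.degree_eq_natDegree h0, h2] at h1
      exact_mod_cast h1
    rw [Polynomial.aeval_eq_sum_range' hdeg]
    exact Submodule.sum_mem _ fun k hk => Submodule.smul_mem _ _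
      (Submodule.subset_span ⟨⟨k, Finset.mem_range.mp hk⟩, rfl⟩)

lemma exp_mem_span (A : Matrix (Fin n) (Fin n) ℝ) (s : ℝ) :
    NormedSpace.exp (s • A) ∈ Submodule.span ℝ (Set.range fun k : Fin n => A ^ (k : ℕ)) := by
  letI : SeminormedRing (Matrix (Fin n) (Fin n) ℝ) := Matrix.linftyOpSemiNormedRing
  letI : NormedRing (Matrix (Fin n) (Fin n) ℝ) := Matrix.linftyOpNormedRing
  letI : NormedAlgebra ℝ (Matrix (Fin n) (Fin n) ℝ) := Matrix.linftyOpNormedAlgebra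
  set S := Submodule.span ℝ (Set.range fun k : Fin n => A ^ (k : ℕ)) with hS
  have hsum : HasSum (fun m : ℕ => ((Nat.factorial m : ℝ))⁻¹ • (s • A) ^ m)
      (NormedSpace.exp (s • A)) :=
    NormedSpace.exp_series_hasSum_exp' (s • A)
  have hclosed : IsClosed (S : Set (Matrix (Fin n) (Fin n) ℝ)) :=
    Submodule.closed_of_finiteDimensional S
  refine hclosed.mem_of_tendsto hsum.tendsto_sum_nat (Filter.Eventually.of_forall fun N => ?_)
  refine Submodule.sum_mem _ fun m _ => ?_
  rw [smul_pow]
  exact Submodule.smul_mem _ _ (Submodule.smul_mem _ _ (pow_mem_span A m))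

lemma vecMul_smul_matrix {m q : ℕ} (v : Fin m → ℝ) (t : ℝ) (P : Matrix (Fin m) (Fin q) ℝ) :
    v ᵥ* (t • P) = t • (v ᵥ* P) := by
  ext j
  simp [Matrix.vecMul, dotProduct, Finset.mul_sum, mul_left_comm]

/-- The linear functional `M ↦ c ᵥ* (M * B)`. -/
def rowFunctional (B : Matrix (Fin n) (Fin p) ℝ) (c : Fin n → ℝ) :
    Matrix (Fin n) (Fin n) ℝ →ₗ[ℝ] (Fin p → ℝ) where
  toFun M := c ᵥ* (M * B)
  map_add' M N := by simp only [Matrix.add_mul, Matrix.vecMul_add]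
  map_smul' t M := by simp only [Matrix.smul_mul, vecMul_smul_matrix, RingHom.id_apply]

lemma vecMul_exp_eq_zero {A : Matrix (Fin n) (Fin n) ℝ} {B : Matrix (Fin n) (Fin p) ℝ}
    {c : Fin n → ℝ} (h : ∀ k : ℕ, k < n → c ᵥ* (A ^ k * B) = 0) (s : ℝ) :
    c ᵥ* (NormedSpace.exp (s • A) * B) = 0 := by
  have hker : Submodule.span ℝ (Set.range fun k : Fin n => A ^ (k : ℕ))
      ≤ LinearMap.ker (rowFunctional B c) := by
    rw [Submodule.span_le]
    rintro _ ⟨k, rfl⟩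
    exact LinearMap.mem_ker.mpr (h k k.isLt)
  exact LinearMap.mem_ker.mp (hker (exp_mem_span A s))

lemma deriv_vanish {A : Matrix (Fin n) (Fin n) ℝ} {D : Matrix (Fin n) (Fin p) ℝ}
    {c : Fin n → ℝ} {a b : ℝ}
    (h : ∀ s ∈ Set.Ioo a b, c ᵥ* (NormedSpace.exp (s • A) * D) = 0) :
    ∀ s ∈ Set.Ioo a b, c ᵥ* (NormedSpace.exp (s • A) * (A * D)) = 0 := by
  letI : SeminormedRing (Matrix (Fin n) (Fin n) ℝ) := Matrix.linftyOpSemiNormedRing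
  letI : NormedRing (Matrix (Fin n) (Fin n) ℝ) := Matrix.linftyOpNormedRing
  letI : NormedAlgebra ℝ (Matrix (Fin n) (Fin n) ℝ) := Matrix.linftyOpNormedAlgebra
  intro s hs
  ext j
  let L : Matrix (Fin n) (Fin n) ℝ →L[ℝ] ℝ :=
    LinearMap.toContinuousLinearMap ((LinearMap.proj j).comp (rowFunctional D c))
  have hL : ∀ M : Matrix (Fin n) (Fin n) ℝ, L M = (c ᵥ* (M * D)) j := fun M => rfl
  have h1 : HasDerivAt (fun t : ℝ => L (NormedSpace.exp (t • A)))
      (L (NormedSpace.exp (s • A) * A)) s :=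
    L.hasFDerivAt.comp_hasDerivAt s (hasDerivAt_exp_smul_const A s)
  have h2 : HasDerivAt (fun t : ℝ => L (NormedSpace.exp (t • A))) 0 s := by
    have hev : (fun t : ℝ => L (NormedSpace.exp (t • A))) =ᶠ[nhds s] fun _ => (0 : ℝ) := by
      filter_upwards [Ioo_mem_nhds hs.1 hs.2] with t ht
      rw [hL, h t ht]
      rfl
    exact (hasDerivAt_const s (0 : ℝ)).congr_of_eventuallyEq hev
  have h3 : L (NormedSpace.exp (s • A) * A) = 0 := h1.unique h2
  rw [hL] at h3
  rw [← Matrix.mul_assoc] at *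
  simpa using h3

lemma zero_on_Ioo_implies_pow {A : Matrix (Fin n) (Fin n) ℝ} {B : Matrix (Fin n) (Fin p) ℝ}
    {c : Fin n → ℝ} {a b : ℝ} (hab : a < b)
    (h : ∀ s ∈ Set.Ioo a b, c ᵥ* (NormedSpace.exp (s • A) * B) = 0) :
    ∀ k : ℕ, c ᵥ* (A ^ k * B) = 0 := by
  have key : ∀ k : ℕ, ∀ s ∈ Set.Ioo a b,
      c ᵥ* (NormedSpace.exp (s • A) * (A ^ k * B)) = 0 := by
    intro k
    induction k with
    | zero => intro s hs; simpa using h s hs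
    | succ k ih =>
      have := deriv_vanish ih
      intro s hs
      have h' := this s hs
      rw [← Matrix.mul_assoc, ← Matrix.mul_assoc] at h'
      rw [← Matrix.mul_assoc, pow_succ', ← Matrix.mul_assoc]
      exact h'
  set s₀ := (a + b) / 2 with hs₀def
  have hs₀ : s₀ ∈ Set.Ioo a b := ⟨by rw [hs₀def]; linarith, by rw [hs₀def]; linarith⟩
  have hc' : ∀ m : ℕ, (c ᵥ* NormedSpace.exp (s₀ • A)) ᵥ* (A ^ m * B) = 0 := by
    intro m
    rw [Matrix.vecMul_vecMul]
    exact key m s₀ hs₀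
  intro k
  have hexp : (c ᵥ* NormedSpace.exp (s₀ • A)) ᵥ*
      (NormedSpace.exp ((-s₀) • A) * (A ^ k * B)) = 0 := by
    refine vecMul_exp_eq_zero (fun m _ => ?_) (-s₀)
    rw [← Matrix.mul_assoc, ← pow_add]
    exact hc' (m + k)
  have hcomm : Commute (s₀ • A) ((-s₀) • A) :=
    ((Commute.refl A).smul_left s₀).smul_right (-s₀)
  have hinv : NormedSpace.exp (s₀ • A) * NormedSpace.exp ((-s₀) • A) = 1 := by
    rw [← Matrix.exp_add_of_commute _ _ hcomm, ← add_smul, add_neg_cancel, zero_smul,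
      NormedSpace.exp_zero]
  calc c ᵥ* (A ^ k * B)
      = c ᵥ* ((NormedSpace.exp (s₀ • A) * NormedSpace.exp ((-s₀) • A)) * (A ^ k * B)) := by
        rw [hinv, Matrix.one_mul]
    _ = (c ᵥ* NormedSpace.exp (s₀ • A)) ᵥ*
        (NormedSpace.exp ((-s₀) • A) * (A ^ k * B)) := by
        rw [Matrix.mul_assoc, Matrix.vecMul_vecMul]
    _ = 0 := hexp

lemma rank_eq_iff_vecMul {r : ℕ} {c : Type*} [Fintype c] [DecidableEq c]
    (M : Matrix (Fin r) c ℝ) :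
    M.rank = r ↔ ∀ w : Fin r → ℝ, w ᵥ* M = 0 → w = 0 := by
  have h1 : (∀ w : Fin r → ℝ, w ᵥ* M = 0 → w = 0) ↔ LinearMap.ker Mᵀ.mulVecLin = ⊥ := by
    rw [LinearMap.ker_eq_bot']
    constructor
    · intro h w hw
      exact h w (by rwa [← Matrix.mulVec_transpose, ← Matrix.mulVecLin_apply])
    · intro h w hw
      exact h w (by rwa [Matrix.mulVecLin_apply, Matrix.mulVec_transpose])
  rw [← Matrix.rank_transpose, h1]
  have hrn := LinearMap.finrank_range_add_finrank_ker (Mᵀ.mulVecLin)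
  rw [Module.finrank_fin_fun] at hrn
  rw [Matrix.rank]
  constructor
  · intro h
    rw [← Submodule.finrank_eq_zero (R := ℝ)]
    omega
  · intro h
    rw [h, finrank_bot] at hrn
    omega

lemma continuous_exp_smul (A : Matrix (Fin n) (Fin n) ℝ) {g : ℝ → ℝ} (hg : Continuous g) :
    Continuous fun s : ℝ => NormedSpace.exp (g s • A) := by
  letI : SeminormedRing (Matrix (Fin n) (Fin n) ℝ) := Matrix.linftyOpSemiNormedRing
  letI : NormedRing (Matrix (Fin n) (Fin n) ℝ) := Matrix.linftyOpNormedRing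
  letI : NormedAlgebra ℝ (Matrix (Fin n) (Fin n) ℝ) := Matrix.linftyOpNormedAlgebra
  letI : NormedAlgebra ℚ (Matrix (Fin n) (Fin n) ℝ) := NormedAlgebra.restrictScalars ℚ ℝ _
  exact NormedSpace.exp_continuous.comp (hg.smul continuous_const)

lemma dotProduct_integral {m : ℕ} (v : Fin m → ℝ) (f : ℝ → Fin m → ℝ) {a b : ℝ}
    (hf : ∀ i, IntervalIntegrable (fun s => f s i) volume a b) :
    v ⬝ᵥ (fun i => ∫ s in a..b, f s i) = ∫ s in a..b, v ⬝ᵥ f s := by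
  simp only [dotProduct]
  calc ∑ i, v i * ∫ s in a..b, f s i
      = ∑ i, ∫ s in a..b, v i * f s i := by
        refine Finset.sum_congr rfl fun i _ => ?_
        rw [intervalIntegral.integral_const_mul]
    _ = ∫ s in a..b, ∑ i, v i * f s i :=
        (intervalIntegral.integral_finset_sum fun i _ => (hf i).const_mul _).symm

lemma const_mulVec_integral {m q : ℕ} (N : Matrix (Fin m) (Fin q) ℝ) {f : ℝ → Fin q → ℝ}
    {a b : ℝ} (hf : ∀ j, IntervalIntegrable (fun s => f s j) volume a b) :
    N.mulVec (fun j => ∫ s in a..b, f s j) = fun i => ∫ s in a..b, N.mulVec (f s) i := by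
  funext i
  simpa only [Matrix.mulVec, dotProduct] using
    dotProduct_integral (fun j => N i j) f hf

/-- A continuous nonnegative function with zero interval integral vanishes on the open
interval. -/
lemma zero_of_integral_zero {f : ℝ → ℝ} (hf : Continuous f) {t₁ : ℝ} (ht₁ : 0 < t₁)
    (hnn : ∀ s, 0 ≤ f s) (hint : ∫ s in (0:ℝ)..t₁, f s = 0) :
    ∀ s ∈ Set.Ioo 0 t₁, f s = 0 := by
  have hii : IntervalIntegrable f volume 0 t₁ := hf.intervalIntegrable _ _
  have hae : f =ᵐ[volume.restrict (Set.Ioc 0 t₁)] 0 := by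
    rw [← intervalIntegral.integral_eq_zero_iff_of_le_of_nonneg_ae ht₁.le
      (Filter.Eventually.of_forall fun s => hnn s) hii]
    exact hint
  have := MeasureTheory.Measure.eqOn_Ioc_of_ae_eq volume hae hf.continuousOn
    continuousOn_const
  exact fun s hs => this (Set.Ioo_subset_Ioc_self hs)

lemma dotProduct_self_nonneg {m : ℕ} (v : Fin m → ℝ) : 0 ≤ v ⬝ᵥ v :=
  Finset.sum_nonneg fun i _ => mul_self_nonneg _

end OutCtrbAux

/-- **Output controllability rank condition.** Suppose `rank(F) = r`. Every target
state `z* ∈ ℝ^r` is reachable from `x(0) = 0` in time `t₁ > 0` by a continuous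
control if and only if `rank(F·𝒞) = r`. -/
theorem output_controllability_iff_target_reachable {n p r : ℕ}
    (A : Matrix (Fin n) (Fin n) ℝ) (B : Matrix (Fin n) (Fin p) ℝ)
    (F : Matrix (Fin r) (Fin n) ℝ) (t₁ : ℝ) (ht₁ : 0 < t₁)
    (hF : F.rank = r) :
    (∀ z : Fin r → ℝ, ∃ u : ℝ → Fin p → ℝ, Continuous u ∧
        F.mulVec (fun i => ∫ s in (0:ℝ)..t₁,
          (NormedSpace.exp ((t₁ - s) • A) * B).mulVec (u s) i) = z) ↔
      (F * ctrbMat A B).rank = r := by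
  have hEcont : Continuous fun s : ℝ => NormedSpace.exp ((t₁ - s) • A) :=
    OutCtrbAux.continuous_exp_smul A (continuous_const.sub continuous_id)
  constructor
  · -- reachability implies rank condition
    intro hreach
    rw [OutCtrbAux.rank_eq_iff_vecMul]
    intro w hw
    have hck : ∀ k : ℕ, k < n → (w ᵥ* F) ᵥ* (A ^ k * B) = 0 := by
      intro k hk
      have h1 : (w ᵥ* F) ᵥ* ctrbMat A B = 0 := by
        rw [Matrix.vecMul_vecMul]; exact hw
      funext j
      have h2 := congrFun h1 (⟨k, hk⟩, j)
      simpa [ctrbMat, Matrix.vecMul, dotProduct] using h2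
    have hφ := OutCtrbAux.vecMul_exp_eq_zero hck
    obtain ⟨u, hu, hFx⟩ := hreach w
    have hcontv : Continuous fun s => (NormedSpace.exp ((t₁ - s) • A) * B).mulVec (u s) :=
      (hEcont.matrix_mul continuous_const).matrix_mulVec hu
    have hInt : ∀ i, IntervalIntegrable
        (fun s => (NormedSpace.exp ((t₁ - s) • A) * B).mulVec (u s) i)
        MeasureTheory.volume 0 t₁ :=
      fun i => ((continuous_apply i).comp hcontv).intervalIntegrable _ _
    have hz : ∀ s : ℝ,
        (w ᵥ* F) ⬝ᵥ (NormedSpace.exp ((t₁ - s) • A) * B).mulVec (u s) = 0 := by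
      intro s
      rw [dotProduct_mulVec, hφ (t₁ - s), zero_dotProduct]
    have hw0 : w ⬝ᵥ w = 0 := by
      have hout : w ⬝ᵥ (F.mulVec (fun i => ∫ s in (0:ℝ)..t₁,
          (NormedSpace.exp ((t₁ - s) • A) * B).mulVec (u s) i)) = 0 := by
        rw [dotProduct_mulVec, OutCtrbAux.dotProduct_integral _ _ hInt]
        rw [intervalIntegral.integral_congr (g := fun _ => (0:ℝ)) fun s _ => hz s]
        simp
      rw [← hout, hFx]
    exact dotProduct_self_eq_zero.mp hw0
  · -- rank condition implies reachability
    intro hrank z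
    set E : ℝ → Matrix (Fin n) (Fin n) ℝ := fun s => NormedSpace.exp ((t₁ - s) • A) with hE
    set P : ℝ → Matrix (Fin r) (Fin p) ℝ := fun s => F * (E s * B) with hP
    have hPcont : Continuous P := continuous_const.matrix_mul (hEcont.matrix_mul continuous_const)
    set Q : ℝ → Matrix (Fin r) (Fin r) ℝ := fun s => P s * (P s)ᵀ with hQ
    have hQcont : Continuous Q := hPcont.matrix_mul hPcont.matrix_transpose
    set G : Matrix (Fin r) (Fin r) ℝ :=
      Matrix.of fun i j => ∫ s in (0:ℝ)..t₁, Q s i j with hG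
    have hQint : ∀ i j, IntervalIntegrable (fun s => Q s i j)
        MeasureTheory.volume 0 t₁ :=
      fun i j => (hQcont.matrix_elem i j).intervalIntegrable _ _
    have hGmul : ∀ η : Fin r → ℝ,
        G.mulVec η = fun i => ∫ s in (0:ℝ)..t₁, (Q s).mulVec η i := by
      intro η; funext i
      simp only [hG, Matrix.mulVec, dotProduct, Matrix.of_apply]
      calc ∑ j, (∫ s in (0:ℝ)..t₁, Q s i j) * η j
          = ∑ j, ∫ s in (0:ℝ)..t₁, Q s i j * η j := by
            refine Finset.sum_congr rfl fun j _ => ?_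
            rw [intervalIntegral.integral_mul_const]
        _ = ∫ s in (0:ℝ)..t₁, ∑ j, Q s i j * η j :=
            (intervalIntegral.integral_finset_sum fun j _ => (hQint i j).mul_const _).symm
    have hGinj : ∀ η : Fin r → ℝ, G.mulVec η = 0 → η = 0 := by
      intro η hη
      have hconv : ∀ s : ℝ, η ⬝ᵥ (Q s).mulVec η = (η ᵥ* P s) ⬝ᵥ (η ᵥ* P s) := by
        intro s
        rw [show Q s = P s * (P s)ᵀ from rfl, ← Matrix.mulVec_mulVec,
          dotProduct_mulVec, Matrix.mulVec_transpose]
      have hQmulint : ∀ i, IntervalIntegrable (fun s => (Q s).mulVec η i)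
          MeasureTheory.volume 0 t₁ :=
        fun i => ((continuous_apply i).comp
          (hQcont.matrix_mulVec continuous_const)).intervalIntegrable _ _
      have hint0 : ∫ s in (0:ℝ)..t₁, (η ᵥ* P s) ⬝ᵥ (η ᵥ* P s) = 0 := by
        have h1 : η ⬝ᵥ G.mulVec η = 0 := by rw [hη, dotProduct_zero]
        rw [hGmul, OutCtrbAux.dotProduct_integral _ _ hQmulint] at h1
        calc ∫ s in (0:ℝ)..t₁, (η ᵥ* P s) ⬝ᵥ (η ᵥ* P s)
            = ∫ s in (0:ℝ)..t₁, η ⬝ᵥ (Q s).mulVec η :=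
              intervalIntegral.integral_congr fun s _ => (hconv s).symm
          _ = 0 := h1
      have hcontint : Continuous fun s => (η ᵥ* P s) ⬝ᵥ (η ᵥ* P s) :=
        (continuous_const.matrix_vecMul hPcont).dotProduct
          (continuous_const.matrix_vecMul hPcont)
      have hvanish := OutCtrbAux.zero_of_integral_zero hcontint ht₁
        (fun s => OutCtrbAux.dotProduct_self_nonneg _) hint0
      have hrow : ∀ σ ∈ Set.Ioo (0:ℝ) t₁,
          (η ᵥ* F) ᵥ* (NormedSpace.exp (σ • A) * B) = 0 := by
        intro σ hσ
        have hs : t₁ - σ ∈ Set.Ioo (0:ℝ) t₁ := ⟨by linarith [hσ.2], by linarith [hσ.1]⟩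
        have h0 : η ᵥ* P (t₁ - σ) = 0 :=
          dotProduct_self_eq_zero.mp (hvanish _ hs)
        have hPs : P (t₁ - σ) = F * (NormedSpace.exp (σ • A) * B) := by
          rw [hP]
          simp only [hE]
          norm_num
        rwa [hPs, ← Matrix.vecMul_vecMul] at h0
      have hpow := OutCtrbAux.zero_on_Ioo_implies_pow ht₁ hrow
      have hvm : η ᵥ* (F * ctrbMat A B) = 0 := by
        rw [← Matrix.vecMul_vecMul]
        funext kj
        obtain ⟨k, j⟩ := kj
        have := congrFun (hpow (k : ℕ)) j
        simpa [ctrbMat, Matrix.vecMul, dotProduct] using this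
      exact (OutCtrbAux.rank_eq_iff_vecMul _).mp hrank η hvm
    have hsurj : Function.Surjective G.mulVecLin := by
      have hinj : Function.Injective G.mulVecLin := by
        rw [← LinearMap.ker_eq_bot, LinearMap.ker_eq_bot']
        intro η hη
        exact hGinj η (by rwa [← Matrix.mulVecLin_apply])
      exact LinearMap.injective_iff_surjective.mp hinj
    obtain ⟨η, hη⟩ := hsurj z
    refine ⟨fun s => (P s)ᵀ.mulVec η,
      hPcont.matrix_transpose.matrix_mulVec continuous_const, ?_⟩
    have hRcont : Continuous fun s => (E s * B) * (P s)ᵀ :=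
      (hEcont.matrix_mul continuous_const).matrix_mul hPcont.matrix_transpose
    have hRint : ∀ j, IntervalIntegrable
        (fun s => (((E s * B) * (P s)ᵀ).mulVec η) j) MeasureTheory.volume 0 t₁ :=
      fun j => ((continuous_apply j).comp
        (hRcont.matrix_mulVec continuous_const)).intervalIntegrable _ _
    have e1 : (fun i => ∫ s in (0:ℝ)..t₁, ((E s * B).mulVec ((P s)ᵀ.mulVec η)) i)
        = fun i => ∫ s in (0:ℝ)..t₁, (((E s * B) * (P s)ᵀ).mulVec η) i := by
      simp only [Matrix.mulVec_mulVec]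
    rw [e1, OutCtrbAux.const_mulVec_integral F hRint]
    have e2 : (fun i => ∫ s in (0:ℝ)..t₁, (F.mulVec (((E s * B) * (P s)ᵀ).mulVec η)) i)
        = G.mulVec η := by
      rw [hGmul]
      funext i
      apply intervalIntegral.integral_congr
      intro s _
      simp only [hQ, hP, Matrix.mulVec_mulVec, Matrix.mul_assoc]
    rw [e2, ← Matrix.mulVecLin_apply]
    exact hη
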